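/- Let p₁ ∈ (1/2, 1), and let R(b) and R̃(b) be respectively the clean and noisy population 0-1 risks of the threshold classifier f_b under the distributions defined in the context. Then: (a) the function b ↦ max{R(b), R̃(b)} attains its minimum over b ∈ [−2,2] uniquely at b = −3/2, with minimum value 1/4, and the clean risk of the minimizer is R(−3/2) = 1/4 > 0; whereas (b) the set of minimizers over b ∈ [−2,2] of b ↦ (R(b) + R̃(b))/2 is exactly the interval [−1,1], and every such minimizer has clean risk R(b) = 0. Hence the worst-case (distributionally robust) objective selects a classifier with strictly positive clean population risk while the average objective selects only classifiers with zero clean population risk. -/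

import Mathlib

open MeasureTheory Set

/-- `x` uniform on `[-2,-1] ∪ [1,2]`: each interval carries mass `1/2`. -/
noncomputable def muX : Measure ℝ :=
  (2 : ENNReal)⁻¹ • (volume.restrict (Icc (-2 : ℝ) (-1)) + volume.restrict (Icc (1 : ℝ) 2))

/-- Bernoulli flip indicator: `true` (flip) with probability `p`. -/
noncomputable def bern (p : ℝ) : Measure Bool :=
  ENNReal.ofReal p • Measure.dirac true + ENNReal.ofReal (1 - p) • Measure.dirac false

/-- Clean label: `y = 1` if `x > 0`, `y = -1` otherwise. -/
noncomputable def cleanLabel (x : ℝ) : ℝ := if 0 < x then 1 else -1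

/-- Noisy label: the clean label is flipped exactly when `x ∈ [-2,-1]` and the
(independent, probability-`p₁`) flip indicator is `true`. -/
noncomputable def noisyLabel (q : ℝ × Bool) : ℝ :=
  if q.1 ∈ Icc (-2 : ℝ) (-1) ∧ q.2 = true then -cleanLabel q.1 else cleanLabel q.1

/-- Threshold classifier `f_b(z) = 1 - 2·1{z < b}`. -/
noncomputable def fthr (b z : ℝ) : ℝ := 1 - 2 * (if z < b then 1 else 0)

/-- Clean population 0-1 risk `R(b) = P(y ≠ f_b(x))` (client 1). -/
noncomputable def cleanRisk (b : ℝ) : ℝ :=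
  (muX {x : ℝ | cleanLabel x ≠ fthr b x}).toReal

/-- Noisy population 0-1 risk `R̃(b) = P(ỹ ≠ f_b(x))` (client 2). -/
noncomputable def noisyRisk (p₁ b : ℝ) : ℝ :=
  ((muX.prod (bern p₁)) {q : ℝ × Bool | noisyLabel q ≠ fthr b q.1}).toReal

lemma muX_apply (A : Set ℝ) :
    muX A = 2⁻¹ * (volume (A ∩ Icc (-2:ℝ) (-1)) + volume (A ∩ Icc (1:ℝ) 2)) := by
  simp [muX, Measure.add_apply, Measure.restrict_apply' measurableSet_Icc, mul_add]

lemma bern_true (p : ℝ) : bern p {true} = ENNReal.ofReal p := by simp [bern]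
lemma bern_false (p : ℝ) : bern p {false} = ENNReal.ofReal (1 - p) := by simp [bern]
instance (p : ℝ) : SFinite (bern p) := by unfold bern; infer_instance

lemma cleanSet (b : ℝ) :
    {x : ℝ | cleanLabel x ≠ fthr b x} = (Ioi 0 ∩ Iio b) ∪ (Iic 0 ∩ Ici b) := by
  ext x
  by_cases h1 : 0 < x <;> by_cases h2 : x < b <;>
    simp [cleanLabel, fthr, h1, h2, mem_Ioi, mem_Iio, mem_Iic, mem_Ici] <;>
    norm_num <;>
    first
    | exact ⟨h1, h2⟩
    | exact fun h => absurd h2 (by simpa using h)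
    | (simp only [not_lt] at h1 h2; simp [h1, h2, not_lt.mpr, lt_irrefl])

lemma noisySetTrue (b : ℝ) :
    {x : ℝ | noisyLabel (x, true) ≠ fthr b x} =
      (Icc (-2:ℝ) (-1) ∩ Iio b) ∪ ({x : ℝ | cleanLabel x ≠ fthr b x} \ Icc (-2:ℝ) (-1)) := by
  ext x
  by_cases hI : x ∈ Icc (-2:ℝ) (-1)
  · rw [mem_Icc] at hI
    have hx : ¬ (0 < x) := by push_neg; linarith [hI.2]
    by_cases h2 : x < b <;>
      simp [noisyLabel, cleanLabel, fthr, hI, hI.1, hI.2, hx, h2] <;>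
      try intro <;> linarith
  · have hI' : ¬ ((-2:ℝ) ≤ x ∧ x ≤ -1) := by rwa [mem_Icc] at hI
    simp [noisyLabel, hI, hI', mem_Iio]

lemma prodSplit (P : ℝ × Bool → Prop) :
    {q : ℝ × Bool | P q} =
      ({x | P (x, true)} ×ˢ ({true} : Set Bool)) ∪ ({x | P (x, false)} ×ˢ ({false} : Set Bool)) := by
  ext ⟨x, t⟩; cases t <;> simp

lemma noisyFalse (x : ℝ) : noisyLabel (x, false) = cleanLabel x := by simp [noisyLabel]

lemma noisyRisk_eq (p b : ℝ) :
    noisyRisk p b =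
      (ENNReal.ofReal p * muX {x : ℝ | noisyLabel (x, true) ≠ fthr b x}
        + ENNReal.ofReal (1 - p) * muX {x : ℝ | cleanLabel x ≠ fthr b x}).toReal := by
  unfold noisyRisk
  rw [prodSplit (fun q => noisyLabel q ≠ fthr b q.1)]
  have hmeasf : MeasurableSet ({x : ℝ | noisyLabel (x, false) ≠ fthr b x} ×ˢ ({false} : Set Bool)) := by
    apply MeasurableSet.prod
    · have : {x : ℝ | noisyLabel (x, false) ≠ fthr b x} = (Ioi 0 ∩ Iio b) ∪ (Iic 0 ∩ Ici b) := by
        simp only [noisyFalse]; exact cleanSet b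
      rw [this]
      exact ((measurableSet_Ioi.inter measurableSet_Iio).union
        (measurableSet_Iic.inter measurableSet_Ici))
    · exact MeasurableSet.singleton false
  have hdisj : Disjoint ({x : ℝ | noisyLabel (x, true) ≠ fthr b x} ×ˢ ({true} : Set Bool))
      ({x : ℝ | noisyLabel (x, false) ≠ fthr b x} ×ˢ ({false} : Set Bool)) := by
    rw [Set.disjoint_left]
    rintro ⟨x, t⟩ ⟨-, ht⟩ ⟨-, hf⟩
    simp at ht hf; rw [ht] at hf; simp at hf
  rw [measure_union hdisj hmeasf, Measure.prod_prod, Measure.prod_prod, bern_true, bern_false]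
  simp only [noisyFalse]
  ring_nf

/-! Interval intersection computations. -/

lemma S_lo1 {b : ℝ} (h1 : -2 ≤ b) (h2 : b ≤ -1) :
    ((Ioi 0 ∩ Iio b) ∪ (Iic 0 ∩ Ici b)) ∩ Icc (-2:ℝ) (-1) = Icc b (-1) := by
  ext x
  simp only [mem_inter_iff, mem_union, mem_Ioi, mem_Iio, mem_Iic, mem_Ici, mem_Icc]
  constructor
  · rintro ⟨⟨hx, hxb⟩ | ⟨hx, hxb⟩, hl, hr⟩ <;> constructor <;> linarith
  · rintro ⟨hl, hr⟩
    exact ⟨Or.inr ⟨by linarith, hl⟩, by linarith, hr⟩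

lemma S_lo2 {b : ℝ} (h2 : b ≤ 1) :
    ((Ioi 0 ∩ Iio b) ∪ (Iic 0 ∩ Ici b)) ∩ Icc (1:ℝ) 2 = ∅ := by
  ext x
  simp only [mem_inter_iff, mem_union, mem_Ioi, mem_Iio, mem_Iic, mem_Ici, mem_Icc,
    mem_empty_iff_false, iff_false]
  rintro ⟨⟨hx, hxb⟩ | ⟨hx, hxb⟩, hl, hr⟩ <;> linarith

lemma S_mid1 {b : ℝ} (h1 : -1 < b) :
    ((Ioi 0 ∩ Iio b) ∪ (Iic 0 ∩ Ici b)) ∩ Icc (-2:ℝ) (-1) = ∅ := by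
  ext x
  simp only [mem_inter_iff, mem_union, mem_Ioi, mem_Iio, mem_Iic, mem_Ici, mem_Icc,
    mem_empty_iff_false, iff_false]
  rintro ⟨⟨hx, hxb⟩ | ⟨hx, hxb⟩, hl, hr⟩ <;> linarith

lemma S_hi2 {b : ℝ} (h1 : 1 < b) (h2 : b ≤ 2) :
    ((Ioi 0 ∩ Iio b) ∪ (Iic 0 ∩ Ici b)) ∩ Icc (1:ℝ) 2 = Ico 1 b := by
  ext x
  simp only [mem_inter_iff, mem_union, mem_Ioi, mem_Iio, mem_Iic, mem_Ici, mem_Icc, mem_Ico]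
  constructor
  · rintro ⟨⟨hx, hxb⟩ | ⟨hx, hxb⟩, hl, hr⟩ <;> constructor <;> linarith
  · rintro ⟨hl, hr⟩
    exact ⟨Or.inl ⟨by linarith, hr⟩, hl, by linarith⟩

lemma T_lo1 {b : ℝ} (h1 : -2 ≤ b) (h2 : b ≤ -1) :
    ((Icc (-2:ℝ) (-1) ∩ Iio b) ∪ (((Ioi 0 ∩ Iio b) ∪ (Iic 0 ∩ Ici b)) \ Icc (-2:ℝ) (-1)))
      ∩ Icc (-2:ℝ) (-1) = Ico (-2) b := by
  ext x
  simp only [mem_inter_iff, mem_union, mem_Ioi, mem_Iio, mem_Iic, mem_Ici, mem_Icc, mem_Ico,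
    mem_diff]
  constructor
  · rintro ⟨⟨⟨hl, hr⟩, hxb⟩ | ⟨-, hno⟩, hl', hr'⟩
    · exact ⟨hl, hxb⟩
    · exact absurd ⟨hl', hr'⟩ hno
  · rintro ⟨hl, hr⟩
    exact ⟨Or.inl ⟨⟨hl, by linarith⟩, hr⟩, hl, by linarith⟩

lemma T_mid1 {b : ℝ} (h1 : -1 < b) :
    ((Icc (-2:ℝ) (-1) ∩ Iio b) ∪ (((Ioi 0 ∩ Iio b) ∪ (Iic 0 ∩ Ici b)) \ Icc (-2:ℝ) (-1)))
      ∩ Icc (-2:ℝ) (-1) = Icc (-2) (-1) := by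
  ext x
  simp only [mem_inter_iff, mem_union, mem_Ioi, mem_Iio, mem_Iic, mem_Ici, mem_Icc, mem_diff]
  constructor
  · rintro ⟨-, h⟩; exact h
  · rintro ⟨hl, hr⟩
    exact ⟨Or.inl ⟨⟨hl, hr⟩, by linarith⟩, hl, hr⟩

lemma T_2 (b : ℝ) :
    ((Icc (-2:ℝ) (-1) ∩ Iio b) ∪ (((Ioi 0 ∩ Iio b) ∪ (Iic 0 ∩ Ici b)) \ Icc (-2:ℝ) (-1)))
      ∩ Icc (1:ℝ) 2 = ((Ioi 0 ∩ Iio b) ∪ (Iic 0 ∩ Ici b)) ∩ Icc (1:ℝ) 2 := by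
  ext x
  simp only [mem_inter_iff, mem_union, mem_Ioi, mem_Iio, mem_Iic, mem_Ici, mem_Icc, mem_diff]
  constructor
  · rintro ⟨⟨⟨hl, hr⟩, hxb⟩ | ⟨hS, -⟩, hl', hr'⟩
    · linarith
    · exact ⟨hS, hl', hr'⟩
  · rintro ⟨hS, hl, hr⟩
    refine ⟨Or.inr ⟨hS, ?_⟩, hl, hr⟩
    rintro ⟨-, h⟩; linarith

/-! ENNReal → ℝ bookkeeping. -/

lemma half_eq : (2 : ENNReal)⁻¹ = ENNReal.ofReal (1/2) := by
  rw [show (1:ℝ)/2 = 2⁻¹ by norm_num, ENNReal.ofReal_inv_of_pos (by norm_num)]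
  norm_num

lemma toReal_term (p a : ℝ) (hp : 0 ≤ p) (ha : 0 ≤ a) :
    (ENNReal.ofReal p * (2⁻¹ * ENNReal.ofReal a)).toReal = p * (a/2) := by
  rw [half_eq, ← ENNReal.ofReal_mul (by norm_num), ← ENNReal.ofReal_mul hp,
    ENNReal.toReal_ofReal (by positivity)]
  ring

lemma toReal_half (a : ℝ) (ha : 0 ≤ a) :
    ((2:ENNReal)⁻¹ * ENNReal.ofReal a).toReal = a/2 := by
  rw [half_eq, ← ENNReal.ofReal_mul (by norm_num), ENNReal.toReal_ofReal (by positivity)]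
  ring

lemma term_ne_top (p a : ℝ) : ENNReal.ofReal p * (2⁻¹ * ENNReal.ofReal a) ≠ ⊤ := by
  exact ENNReal.mul_ne_top ENNReal.ofReal_ne_top
    (ENNReal.mul_ne_top (by simp) ENNReal.ofReal_ne_top)

/-! Piecewise risk formulas. -/

lemma cleanRisk_lo {b : ℝ} (h1 : -2 ≤ b) (h2 : b ≤ -1) : cleanRisk b = (-1 - b)/2 := by
  unfold cleanRisk
  rw [cleanSet, muX_apply, S_lo1 h1 h2, S_lo2 (by linarith), measure_empty, add_zero,
    Real.volume_Icc]
  exact toReal_half _ (by linarith)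

lemma cleanRisk_mid {b : ℝ} (h1 : -1 < b) (h2 : b ≤ 1) : cleanRisk b = 0 := by
  unfold cleanRisk
  rw [cleanSet, muX_apply, S_mid1 h1, S_lo2 h2]
  simp

lemma cleanRisk_hi {b : ℝ} (h1 : 1 < b) (h2 : b ≤ 2) : cleanRisk b = (b - 1)/2 := by
  unfold cleanRisk
  rw [cleanSet, muX_apply, S_mid1 (by linarith), S_hi2 h1 h2, measure_empty, zero_add,
    Real.volume_Ico]
  exact toReal_half _ (by linarith)

lemma noisyRisk_lo {p b : ℝ} (hp : 0 ≤ p) (hp1 : p ≤ 1) (h1 : -2 ≤ b) (h2 : b ≤ -1) :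
    noisyRisk p b = p * ((b+2)/2) + (1-p) * ((-1-b)/2) := by
  rw [noisyRisk_eq, noisySetTrue, cleanSet]
  simp only [muX_apply]
  rw [T_lo1 h1 h2, T_2, S_lo1 h1 h2, S_lo2 (by linarith : b ≤ 1), measure_empty, add_zero,
    add_zero, Real.volume_Ico, Real.volume_Icc,
    ENNReal.toReal_add (term_ne_top _ _) (term_ne_top _ _),
    toReal_term p _ hp (by linarith), toReal_term (1-p) _ (by linarith) (by linarith)]
  ring_nf

lemma noisyRisk_mid {p b : ℝ} (hp : 0 ≤ p) (h1 : -1 < b) (h2 : b ≤ 1) :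
    noisyRisk p b = p/2 := by
  rw [noisyRisk_eq, noisySetTrue, cleanSet]
  simp only [muX_apply]
  rw [T_mid1 h1, T_2, S_mid1 h1, S_lo2 h2, measure_empty, add_zero, Real.volume_Icc]
  simp only [measure_empty, add_zero, mul_zero, zero_add]
  rw [toReal_term p _ hp (by norm_num)]
  norm_num
  ring

lemma noisyRisk_hi {p b : ℝ} (hp : 0 ≤ p) (hp1 : p ≤ 1) (h1 : 1 < b) (h2 : b ≤ 2) :
    noisyRisk p b = p/2 + (b-1)/2 := by
  rw [noisyRisk_eq, noisySetTrue, cleanSet]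
  simp only [muX_apply]
  rw [T_mid1 (by linarith), T_2, S_mid1 (by linarith), S_hi2 h1 h2, Real.volume_Icc,
    Real.volume_Ico, measure_empty, zero_add,
    ← ENNReal.ofReal_add (by norm_num) (by linarith : (0:ℝ) ≤ b - 1),
    ENNReal.toReal_add (term_ne_top _ _) (term_ne_top _ _),
    toReal_term p _ hp (by linarith), toReal_term (1-p) _ (by linarith) (by linarith)]
  ring_nf

/-- **Worst-case vs. average objective for the two-client example.**
For `p₁ ∈ (1/2,1)`:
(a) `b ↦ max{R(b), R̃(b)}` attains its minimum over `[-2,2]` uniquely at `b = -3/2`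
with value `1/4`, and the clean risk there is `R(-3/2) = 1/4 > 0`;
(b) the minimizers over `[-2,2]` of `b ↦ (R(b)+R̃(b))/2` form exactly `[-1,1]`, and
every such minimizer has zero clean risk. -/
theorem worst_case_vs_average (p₁ : ℝ) (hp₁ : p₁ ∈ Set.Ioo (1/2 : ℝ) 1) :
    (max (cleanRisk (-3/2)) (noisyRisk p₁ (-3/2)) = 1/4) ∧
    (∀ b ∈ Icc (-2 : ℝ) 2, b ≠ -3/2 →
        max (cleanRisk (-3/2)) (noisyRisk p₁ (-3/2))
          < max (cleanRisk b) (noisyRisk p₁ b)) ∧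
    (cleanRisk (-3/2) = 1/4 ∧ (0 : ℝ) < cleanRisk (-3/2)) ∧
    ({b : ℝ | b ∈ Icc (-2 : ℝ) 2 ∧ ∀ b' ∈ Icc (-2 : ℝ) 2,
        (cleanRisk b + noisyRisk p₁ b) / 2 ≤ (cleanRisk b' + noisyRisk p₁ b') / 2}
      = Icc (-1 : ℝ) 1) ∧
    (∀ b ∈ Icc (-1 : ℝ) 1, cleanRisk b = 0) := by
  obtain ⟨hp, hp'⟩ := hp₁
  have hp0 : (0:ℝ) ≤ p₁ := by linarith
  have hp1 : p₁ ≤ 1 := le_of_lt hp'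
  have R32 : cleanRisk (-3/2) = 1/4 := by
    rw [cleanRisk_lo (by norm_num) (by norm_num)]; norm_num
  have N32 : noisyRisk p₁ (-3/2) = 1/4 := by
    rw [noisyRisk_lo hp0 hp1 (by norm_num) (by norm_num)]; ring_nf
  have hmax32 : max (cleanRisk (-3/2)) (noisyRisk p₁ (-3/2)) = 1/4 := by
    rw [R32, N32, max_self]
  -- helper: risks on [-1,1]
  have hmidC : ∀ b ∈ Icc (-1:ℝ) 1, cleanRisk b = 0 := by
    intro b hb
    rcases hb with ⟨hb1, hb2⟩
    rcases eq_or_lt_of_le hb1 with h | h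
    · rw [← h, cleanRisk_lo (by norm_num) (by norm_num)]; norm_num
    · exact cleanRisk_mid h hb2
  have hmidN : ∀ b ∈ Icc (-1:ℝ) 1, noisyRisk p₁ b = p₁/2 := by
    intro b hb
    rcases hb with ⟨hb1, hb2⟩
    rcases eq_or_lt_of_le hb1 with h | h
    · rw [← h, noisyRisk_lo hp0 hp1 (by norm_num) (by norm_num)]; ring_nf
    · exact noisyRisk_mid hp0 h hb2
  -- lower bound for the sum of risks on [-2,2]
  have hsum_ge : ∀ b ∈ Icc (-2:ℝ) 2, p₁/2 ≤ cleanRisk b + noisyRisk p₁ b := by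
    intro b hb
    rcases hb with ⟨hb1, hb2⟩
    rcases le_or_gt b (-1) with h | h
    · rw [cleanRisk_lo hb1 h, noisyRisk_lo hp0 hp1 hb1 h]
      nlinarith [mul_nonneg (by linarith : (0:ℝ) ≤ 1 - p₁) (by linarith : (0:ℝ) ≤ -1 - b)]
    · rcases le_or_gt b 1 with h' | h'
      · rw [cleanRisk_mid h h', noisyRisk_mid hp0 h h']
        linarith
      · rw [cleanRisk_hi h' hb2, noisyRisk_hi hp0 hp1 h' hb2]
        linarith
  refine ⟨hmax32, ?_, ⟨R32, by rw [R32]; norm_num⟩, ?_, hmidC⟩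
  · -- strict minimality of the max at -3/2
    rintro b ⟨hb1, hb2⟩ hne
    rw [hmax32]
    rcases le_or_gt b (-1) with h | h
    · rcases lt_or_ge b (-3/2) with hlt | hge
      · have : (1:ℝ)/4 < cleanRisk b := by
          rw [cleanRisk_lo hb1 h]; linarith
        exact lt_max_iff.mpr (Or.inl this)
      · have hgt : -3/2 < b := lt_of_le_of_ne hge (Ne.symm hne)
        have : (1:ℝ)/4 < noisyRisk p₁ b := by
          rw [noisyRisk_lo hp0 hp1 hb1 h]
          nlinarith [mul_pos (by linarith : (0:ℝ) < 2*p₁ - 1) (by linarith : (0:ℝ) < b + 3/2)]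
        exact lt_max_iff.mpr (Or.inr this)
    · rcases le_or_gt b 1 with h' | h'
      · have : (1:ℝ)/4 < noisyRisk p₁ b := by
          rw [noisyRisk_mid hp0 h h']; linarith
        exact lt_max_iff.mpr (Or.inr this)
      · have : (1:ℝ)/4 < noisyRisk p₁ b := by
          rw [noisyRisk_hi hp0 hp1 h' hb2]; linarith
        exact lt_max_iff.mpr (Or.inr this)
  · -- minimizer set of the average is exactly [-1,1]
    ext b
    simp only [mem_setOf_eq, mem_Icc]
    constructor
    · rintro ⟨⟨hb1, hb2⟩, hmin⟩
      have h0 := hmin 0 (by constructor <;> norm_num)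
      have hC0 : cleanRisk 0 = 0 := hmidC 0 (by constructor <;> norm_num)
      have hN0 : noisyRisk p₁ 0 = p₁/2 := hmidN 0 (by constructor <;> norm_num)
      rw [hC0, hN0] at h0
      constructor
      · by_contra hc
        push_neg at hc
        rw [cleanRisk_lo hb1 (by linarith), noisyRisk_lo hp0 hp1 hb1 (by linarith)] at h0
        nlinarith [mul_pos (by linarith : (0:ℝ) < 1 - p₁) (by linarith : (0:ℝ) < -1 - b)]
      · by_contra hc
        push_neg at hc
        rw [cleanRisk_hi hc hb2, noisyRisk_hi hp0 hp1 hc hb2] at h0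
        linarith
    · rintro ⟨hb1, hb2⟩
      refine ⟨⟨by linarith, by linarith⟩, fun b' hb' => ?_⟩
      have hC : cleanRisk b = 0 := hmidC b ⟨hb1, hb2⟩
      have hN : noisyRisk p₁ b = p₁/2 := hmidN b ⟨hb1, hb2⟩
      rw [hC, hN]
      have := hsum_ge b' hb'
      linarith
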